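/- Let A₁,…,A_m be nonempty compact sets in ℝ and let (𝒢, β) be a fractional partition of [m]. If for every S ∈ 𝒢 the Minkowski sum ∑_{i∈S} A_i is an interval, then ∑_{i∈[m]} A_i is an interval and |∑_{i∈[m]} A_i| = ∑_{S∈𝒢} β(S)·|∑_{i∈S} A_i|. -/

import Mathlib

open MeasureTheory Pointwise Set

/-- `(𝒢, β)` is a fractional partition of `[m]` (indices `Fin m`). -/
def IsFractionalPartition (m : ℕ) (G : Finset (Finset (Fin m)))
    (β : Finset (Fin m) → ℝ) : Prop :=
  (∀ S ∈ G, S.Nonempty) ∧ (∀ S ∈ G, 0 ≤ β S ∧ β S ≤ 1) ∧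
    ∀ i : Fin m, ∑ S ∈ G.filter (fun S => i ∈ S), β S = 1

private lemma isCompact_finset_sum {ι : Type*} (S : Finset ι) (A : ι → Set ℝ)
    (hc : ∀ i, IsCompact (A i)) : IsCompact (∑ i ∈ S, A i) := by
  classical
  induction S using Finset.induction_on with
  | empty =>
    rw [Finset.sum_empty, show (0 : Set ℝ) = {0} from rfl]
    exact isCompact_singleton
  | insert _ _ h ih =>
    rw [Finset.sum_insert h]
    exact (hc _).add ih

theorem fractional_equality_of_intervals (m : ℕ) (A : Fin m → Set ℝ)
    (hne : ∀ i, (A i).Nonempty) (hc : ∀ i, IsCompact (A i))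
    (G : Finset (Finset (Fin m))) (β : Finset (Fin m) → ℝ)
    (hfp : IsFractionalPartition m G β)
    (hint : ∀ S ∈ G, ∃ a b : ℝ, a ≤ b ∧ (∑ i ∈ S, A i) = Icc a b) :
    (∃ a b : ℝ, a ≤ b ∧ (∑ i : Fin m, A i) = Icc a b) ∧
      (volume (∑ i : Fin m, A i)).toReal =
        ∑ S ∈ G, β S * (volume (∑ i ∈ S, A i)).toReal := by
  classical
  set a : Fin m → ℝ := fun i => sInf (A i) with ha
  set b : Fin m → ℝ := fun i => sSup (A i) with hb
  have hamem : ∀ i, a i ∈ A i := fun i => (hc i).sInf_mem (hne i)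
  have hbmem : ∀ i, b i ∈ A i := fun i => (hc i).sSup_mem (hne i)
  have hab : ∀ i, ∀ x ∈ A i, a i ≤ x ∧ x ≤ b i := fun i x hx =>
    ⟨csInf_le (hc i).bddBelow hx, le_csSup (hc i).bddAbove hx⟩
  have haleb : ∀ i, a i ≤ b i := fun i => ((hab i _ (hamem i)).1).trans
    ((hab i _ (hamem i)).2)
  -- basic facts about the Minkowski sum over any index set
  have hsub : ∀ S : Finset (Fin m), (∑ i ∈ S, A i) ⊆ Icc (∑ i ∈ S, a i) (∑ i ∈ S, b i) := by
    intro S x hx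
    obtain ⟨g, hg, rfl⟩ := (Set.mem_finset_sum S A x).1 hx
    exact ⟨Finset.sum_le_sum fun i hi => (hab i _ (hg hi)).1,
      Finset.sum_le_sum fun i hi => (hab i _ (hg hi)).2⟩
  have hmema : ∀ S : Finset (Fin m), (∑ i ∈ S, a i) ∈ ∑ i ∈ S, A i := fun S =>
    Set.finset_sum_mem_finset_sum S A a fun i _ => hamem i
  have hmemb : ∀ S : Finset (Fin m), (∑ i ∈ S, b i) ∈ ∑ i ∈ S, A i := fun S =>
    Set.finset_sum_mem_finset_sum S A b fun i _ => hbmem i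
  -- for S ∈ G, the sum is exactly Icc (∑ a) (∑ b)
  have hG : ∀ S ∈ G, (∑ i ∈ S, A i) = Icc (∑ i ∈ S, a i) (∑ i ∈ S, b i) := by
    intro S hS
    obtain ⟨c, d, hcd, hIcc⟩ := hint S hS
    have h1 : (∑ i ∈ S, a i) ∈ Icc c d := hIcc ▸ hmema S
    have h2 : (∑ i ∈ S, b i) ∈ Icc c d := hIcc ▸ hmemb S
    have h3 : c ∈ (∑ i ∈ S, A i) := hIcc ▸ Set.left_mem_Icc.2 hcd
    have h4 : d ∈ (∑ i ∈ S, A i) := hIcc ▸ Set.right_mem_Icc.2 hcd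
    have hc' : c = ∑ i ∈ S, a i := le_antisymm h1.1 (hsub S h3).1
    have hd' : d = ∑ i ∈ S, b i := le_antisymm (hsub S h4).2 h2.2
    rw [hIcc, hc', hd']
  -- coverage
  have hcover : ∀ i : Fin m, ∃ S ∈ G, i ∈ S := by
    intro i
    by_contra h
    push_neg at h
    have : (G.filter (fun S => i ∈ S)) = ∅ := by
      apply Finset.filter_eq_empty_iff.2
      intro S hS
      exact h S hS
    have h1 := hfp.2.2 i
    rw [this, Finset.sum_empty] at h1
    exact zero_ne_one h1
  -- the total sum is the interval
  have hTcomp : IsCompact (∑ i : Fin m, A i) := isCompact_finset_sum _ A hc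
  have hT : (∑ i : Fin m, A i) = Icc (∑ i : Fin m, a i) (∑ i : Fin m, b i) := by
    apply Set.Subset.antisymm (hsub Finset.univ)
    intro t ht
    by_contra htT
    set E : Set ℝ := (∑ i : Fin m, A i) ∩ Iic t with hE
    have hEcomp : IsCompact E := hTcomp.inter_right isClosed_Iic
    have hEne : E.Nonempty := ⟨∑ i : Fin m, a i, hmema Finset.univ, ht.1⟩
    obtain ⟨c, hcdef⟩ : ∃ c, c = sSup E := ⟨_, rfl⟩
    have hcE : c ∈ E := hcdef ▸ hEcomp.sSup_mem hEne
    have hct : c < t := lt_of_le_of_ne hcE.2 (by rintro rfl; exact htT hcE.1)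
    obtain ⟨g, hg, hgsum⟩ := (Set.mem_finset_sum Finset.univ A c).1 hcE.1
    have hglt : ∑ i : Fin m, g i < ∑ i : Fin m, b i := by
      rw [hgsum]; exact lt_of_lt_of_le hct ht.2
    obtain ⟨i, -, hib⟩ : ∃ i ∈ Finset.univ, g i < b i := by
      by_contra h
      push_neg at h
      have : (∑ i : Fin m, b i) ≤ ∑ i : Fin m, g i :=
        Finset.sum_le_sum fun i hi => h i hi
      linarith
    obtain ⟨S, hSG, hiS⟩ := hcover i
    set u := ∑ j ∈ S, g j with hu
    have huA : u ∈ ∑ j ∈ S, A j :=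
      Set.finset_sum_mem_finset_sum S A g fun j hj => hg (Finset.mem_univ j)
    have hulb := (hsub S huA).1
    have hubS : u < ∑ j ∈ S, b j := by
      apply Finset.sum_lt_sum (fun j hj => (hab j _ (hg (Finset.mem_univ j))).2) ⟨i, hiS, hib⟩
    set ε := min (t - c) (∑ j ∈ S, b j - u) with hεdef
    have hεpos : 0 < ε := lt_min (sub_pos.2 hct) (sub_pos.2 hubS)
    have hεle1 : ε ≤ t - c := hεdef ▸ min_le_left _ _
    have hεle2 : ε ≤ ∑ j ∈ S, b j - u := hεdef ▸ min_le_right _ _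
    have huε : u + ε ∈ ∑ j ∈ S, A j := by
      rw [hG S hSG]
      exact ⟨hulb.trans (le_add_of_nonneg_right hεpos.le),
        by linarith⟩
    have hsplitA : (∑ i : Fin m, A i) = (∑ j ∈ S, A j) + ∑ j ∈ Finset.univ \ S, A j := by
      rw [← Finset.sum_sdiff (Finset.subset_univ S), add_comm]
    have hrest : (∑ j ∈ Finset.univ \ S, g j) ∈ ∑ j ∈ Finset.univ \ S, A j :=
      Set.finset_sum_mem_finset_sum _ A g fun j _ => hg (Finset.mem_univ j)
    have hcεT : c + ε ∈ ∑ i : Fin m, A i := by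
      rw [hsplitA]
      have : c + ε = (u + ε) + ∑ j ∈ Finset.univ \ S, g j := by
        rw [← hgsum, ← Finset.sum_sdiff (Finset.subset_univ S)]
        ring
      rw [this]
      exact Set.add_mem_add huε hrest
    have hcεE : c + ε ∈ E := ⟨hcεT, Set.mem_Iic.2 (by linarith)⟩
    have := le_csSup hEcomp.bddAbove hcεE
    rw [← hcdef] at this
    linarith
  have halebtot : (∑ i : Fin m, a i) ≤ ∑ i : Fin m, b i :=
    Finset.sum_le_sum fun i _ => haleb i
  refine ⟨⟨_, _, halebtot, hT⟩, ?_⟩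
  -- the volume computation
  have hvolT : (volume (∑ i : Fin m, A i)).toReal = (∑ i : Fin m, b i) - ∑ i : Fin m, a i := by
    rw [hT, Real.volume_Icc, ENNReal.toReal_ofReal (by linarith)]
  have hvolS : ∀ S ∈ G, (volume (∑ i ∈ S, A i)).toReal = ∑ i ∈ S, (b i - a i) := by
    intro S hS
    rw [hG S hS, Real.volume_Icc, ENNReal.toReal_ofReal
      (by simpa [Finset.sum_sub_distrib] using
        sub_nonneg.2 (Finset.sum_le_sum fun i _ => haleb i)), Finset.sum_sub_distrib]
  have key : (∑ i : Fin m, (b i - a i)) = ∑ S ∈ G, β S * ∑ i ∈ S, (b i - a i) := by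
    have h1 : ∀ i : Fin m, b i - a i =
        ∑ S ∈ G, (if i ∈ S then β S * (b i - a i) else 0) := by
      intro i
      calc b i - a i = (∑ S ∈ G.filter (fun S => i ∈ S), β S) * (b i - a i) := by
            rw [hfp.2.2 i, one_mul]
        _ = ∑ S ∈ G.filter (fun S => i ∈ S), β S * (b i - a i) := Finset.sum_mul _ _ _
        _ = ∑ S ∈ G, (if i ∈ S then β S * (b i - a i) else 0) :=
            Finset.sum_filter _ _
    calc (∑ i : Fin m, (b i - a i))
        = ∑ i : Fin m, ∑ S ∈ G, (if i ∈ S then β S * (b i - a i) else 0) :=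
          Finset.sum_congr rfl fun i _ => h1 i
      _ = ∑ S ∈ G, ∑ i : Fin m, (if i ∈ S then β S * (b i - a i) else 0) :=
          Finset.sum_comm
      _ = ∑ S ∈ G, β S * ∑ i ∈ S, (b i - a i) := by
          refine Finset.sum_congr rfl fun S _ => ?_
          rw [Finset.sum_ite_mem, Finset.univ_inter, Finset.mul_sum]
  rw [hvolT]
  have hrhs : (∑ S ∈ G, β S * (volume (∑ i ∈ S, A i)).toReal)
      = ∑ S ∈ G, β S * ∑ i ∈ S, (b i - a i) :=
    Finset.sum_congr rfl fun S hS => by rw [hvolS S hS]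
  rw [hrhs, ← key, Finset.sum_sub_distrib]
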